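/- For p > 0, each equivalence class of p-simplices of X(Z_2^n) under the relation ~ contains exactly p + 2 simplices. -/

import Mathlib

open Finset

attribute [local instance] Classical.propDecidable

abbrev V (n : ℕ) : Type := Fin n → ZMod 2

def LinIndep {n : ℕ} (s : Finset (V n)) : Prop :=
  LinearIndependent (ZMod 2) (fun x : (s : Set (V n)) => (x : V n))

def IsSimplex (n p : ℕ) (σ : Finset (V n)) : Prop :=
  σ.card = p + 1 ∧ LinIndep σ

def shift {n : ℕ} (σ : Finset (V n)) (α : V n) : Finset (V n) :=
  σ.image (· + α)

def SimpRel {n : ℕ} (σ σ' : Finset (V n)) : Prop :=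
  σ = σ' ∨ ∃ α : V n, σ ∩ σ' = {α} ∧ shift (σ \ {α}) α = σ' \ {α}

lemma zmod2_cases (a : ZMod 2) : a = 0 ∨ a = 1 := by
  fin_cases a
  · exact Or.inl rfl
  · exact Or.inr rfl

lemma vadd_self {n : ℕ} (x : V n) : x + x = 0 := by
  funext i
  have : ∀ a : ZMod 2, a + a = 0 := by decide
  exact this (x i)

lemma linIndep_iff {n : ℕ} (s : Finset (V n)) :
    LinIndep s ↔ ∀ t ⊆ s, ∑ x ∈ t, x = 0 → t = ∅ := by
  rw [LinIndep, Fintype.linearIndependent_iff]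
  constructor
  · intro h t hts hsum
    by_contra hne
    obtain ⟨x, hx⟩ := Finset.nonempty_of_ne_empty hne
    have h1 : ∑ i : (s : Set (V n)), (if (i : V n) ∈ t then (1 : ZMod 2) else 0) • (i : V n) = 0 := by
      rw [Finset.sum_finset_coe (fun y => (if y ∈ t then (1 : ZMod 2) else 0) • y) s]
      simp only [ite_smul, one_smul, zero_smul]
      rw [Finset.sum_ite_mem, Finset.inter_eq_right.mpr hts]
      exact hsum
    have := h (fun i => if (i : V n) ∈ t then (1 : ZMod 2) else 0) h1 ⟨x, Finset.mem_coe.mpr (hts hx)⟩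
    simp [hx] at this
  · intro H g hg i
    let g' : V n → ZMod 2 := fun x => if h : x ∈ s then g ⟨x, Finset.mem_coe.mpr h⟩ else 0
    have hgg : ∀ j : (s : Set (V n)), g j = g' (j : V n) := by
      intro j
      have hj : (j : V n) ∈ s := Finset.mem_coe.mp j.2
      simp only [g', dif_pos hj]
    let t : Finset (V n) := s.filter (fun x => g' x = 1)
    have hsum : ∑ x ∈ t, x = 0 := by
      have e1 : ∑ j : (s : Set (V n)), g j • (j : V n) = ∑ x ∈ s, g' x • x := by
        rw [← Finset.sum_finset_coe (fun y => g' y • y) s]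
        exact Finset.sum_congr rfl (fun j _ => by rw [hgg j])
      have e2 : ∑ x ∈ s, g' x • x = ∑ x ∈ t, x := by
        rw [Finset.sum_filter]
        apply Finset.sum_congr rfl
        intro x _
        rcases zmod2_cases (g' x) with h0 | h1
        · simp [h0]
        · simp [h1]
      rw [← e2, ← e1, hg]
    have ht0 := H t (Finset.filter_subset _ _) hsum
    rcases zmod2_cases (g i) with h0 | h1
    · exact h0
    · exfalso
      have hit : (i : V n) ∈ t :=
        Finset.mem_filter.mpr ⟨Finset.mem_coe.mp i.2, by rw [← hgg i]; exact h1⟩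
      rw [ht0] at hit
      exact absurd hit (Finset.notMem_empty _)

lemma zero_not_mem {n : ℕ} {σ : Finset (V n)} (h : LinIndep σ) : (0 : V n) ∉ σ := by
  intro h0
  have := (linIndep_iff σ).mp h {0} (Finset.singleton_subset_iff.mpr h0) (by simp)
  simp at this

lemma not_mem_shift {n : ℕ} {σ : Finset (V n)} (h : LinIndep σ) {α : V n} (hα : α ∈ σ)
    {x : V n} (hx : x ∈ σ) : x ∉ shift (σ \ {α}) α := by
  intro hmem
  rw [shift, Finset.mem_image] at hmem
  obtain ⟨s, hs, hsx⟩ := hmem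
  obtain ⟨hsσ, hsα⟩ := Finset.mem_sdiff.mp hs
  rw [Finset.mem_singleton] at hsα
  have H := (linIndep_iff σ).mp h
  by_cases hxα : x = α
  · -- s + α = α, so s = 0
    have hs0 : s = 0 := by
      have h2 : s + α = α := by rw [hsx, hxα]
      calc s = s + α + α := by rw [add_assoc, vadd_self, add_zero]
        _ = α + α := by rw [h2]
        _ = 0 := vadd_self α
    exact zero_not_mem h (hs0 ▸ hsσ)
  by_cases hxs : x = s
  · -- s + α = s, so α = 0
    have hα0 : α = 0 := by
      have h2 : s + α = s := by rw [hsx, hxs]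
      calc α = s + (s + α) := by rw [← add_assoc, vadd_self, zero_add]
        _ = s + s := by rw [h2]
        _ = 0 := vadd_self s
    exact zero_not_mem h (hα0 ▸ hα)
  · have hsub : ({x, s, α} : Finset (V n)) ⊆ σ := by
      intro y hy
      simp only [Finset.mem_insert, Finset.mem_singleton] at hy
      rcases hy with rfl | rfl | rfl
      · exact hx
      · exact hsσ
      · exact hα
    have hsum : ∑ y ∈ ({x, s, α} : Finset (V n)), y = 0 := by
      rw [Finset.sum_insert (by simp [hxs, hxα]),
        Finset.sum_insert (by simp [hsα]), Finset.sum_singleton, hsx]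
      exact vadd_self x
    have := H {x, s, α} hsub hsum
    simp at this

lemma key {n : ℕ} {σ : Finset (V n)} (hlin : LinIndep σ) {α : V n} (hα : α ∈ σ) :
    LinIndep (insert α (shift (σ \ {α}) α)) ∧
    (insert α (shift (σ \ {α}) α)).card = σ.card ∧
    σ ∩ insert α (shift (σ \ {α}) α) = {α} ∧
    shift (σ \ {α}) α = insert α (shift (σ \ {α}) α) \ {α} := by
  have H := (linIndep_iff σ).mp hlin
  set X := shift (σ \ {α}) α with hX
  have hαX : α ∉ X := not_mem_shift hlin hα hα
  have hcardX : X.card = σ.card - 1 := by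
    rw [hX, shift, Finset.card_image_of_injective _ (add_left_injective α),
      Finset.sdiff_singleton_eq_erase, Finset.card_erase_of_mem hα]
  refine ⟨?_, ?_, ?_, ?_⟩
  · -- linear independence
    rw [linIndep_iff]
    intro t ht hsum
    set S : Finset (V n) := (σ \ {α}).filter (fun s => s + α ∈ t) with hSdef
    have hSσ : S ⊆ σ := (Finset.filter_subset _ _).trans (Finset.sdiff_subset)
    have hαS : α ∉ S := by
      intro hm
      have := Finset.filter_subset _ _ hm
      rw [Finset.mem_sdiff, Finset.mem_singleton] at this
      exact this.2 rfl
    have himg : t.erase α = S.image (· + α) := by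
      ext x
      simp only [Finset.mem_erase, Finset.mem_image, hSdef, Finset.mem_filter]
      constructor
      · rintro ⟨hxα, hxt⟩
        have hxτ := ht hxt
        rw [Finset.mem_insert] at hxτ
        rcases hxτ with rfl | hxX
        · exact absurd rfl hxα
        · rw [hX, shift, Finset.mem_image] at hxX
          obtain ⟨s, hs, rfl⟩ := hxX
          exact ⟨s, ⟨hs, hxt⟩, rfl⟩
      · rintro ⟨s, ⟨hs, hst⟩, rfl⟩
        refine ⟨?_, hst⟩
        intro h2
        have hs0 : s = 0 := by
          calc s = s + α + α := by rw [add_assoc, vadd_self, add_zero]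
            _ = α + α := by rw [h2]
            _ = 0 := vadd_self α
        exact zero_not_mem hlin (hs0 ▸ (Finset.mem_sdiff.mp hs).1)
    have hsum_erase : ∑ x ∈ t.erase α, x = ∑ s ∈ S, s + ((S.card : ZMod 2)) • α := by
      rw [himg, Finset.sum_image (fun a _ b _ h2 => add_left_injective α h2),
        Finset.sum_add_distrib, Finset.sum_const, Nat.cast_smul_eq_nsmul]
    by_cases hαt : α ∈ t
    · exfalso
      have e : ∑ x ∈ t, x = ∑ s ∈ S, s + ((S.card : ZMod 2) • α + α) := by
        rw [← Finset.sum_erase_add t _ hαt, hsum_erase, add_assoc]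
      rw [hsum] at e
      rcases zmod2_cases ((S.card : ZMod 2)) with h0 | h1
      · rw [h0, zero_smul, zero_add] at e
        have hsum' : ∑ x ∈ insert α S, x = 0 := by
          rw [Finset.sum_insert hαS, add_comm]
          exact e.symm
        have := H (insert α S) (Finset.insert_subset hα hSσ) hsum'
        simp at this
      · rw [h1, one_smul, vadd_self, add_zero] at e
        have hS0 := H S hSσ e.symm
        rw [hS0] at h1
        simp at h1
    · have hte : t.erase α = t := Finset.erase_eq_of_notMem hαt
      have e : ∑ s ∈ S, s + ((S.card : ZMod 2)) • α = 0 := by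
        rw [← hsum_erase, hte, hsum]
      rcases zmod2_cases ((S.card : ZMod 2)) with h0 | h1
      · rw [h0, zero_smul, add_zero] at e
        have hS0 := H S hSσ e
        rw [← hte, himg, hS0, Finset.image_empty]
      · exfalso
        rw [h1, one_smul] at e
        have := H (insert α S) (Finset.insert_subset hα hSσ)
          (by rw [Finset.sum_insert hαS, add_comm]; exact e)
        simp at this
  · -- cardinality
    rw [Finset.card_insert_of_notMem hαX, hcardX]
    have : 1 ≤ σ.card := Finset.card_pos.mpr ⟨α, hα⟩
    omega
  · -- intersection
    ext x
    simp only [Finset.mem_inter, Finset.mem_insert, Finset.mem_singleton]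
    constructor
    · rintro ⟨hxσ, rfl | hxX⟩
      · rfl
      · exact absurd hxX (not_mem_shift hlin hα hxσ)
    · rintro rfl
      exact ⟨hα, Or.inl rfl⟩
  · -- sdiff
    rw [Finset.sdiff_singleton_eq_erase, Finset.erase_insert hαX]

/-- for `p > 0`, each equivalence class of `p`-simplices under `~`
contains exactly `p + 2` simplices. -/
theorem stmt1 (n p : ℕ) (hp : 0 < p) (σ : Finset (V n)) (hσ : IsSimplex n p σ) :
    {σ' : Finset (V n) | IsSimplex n p σ' ∧ SimpRel σ σ'}.ncard = p + 2 := by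
  obtain ⟨hcard, hlin⟩ := hσ
  set f : V n → Finset (V n) := fun α => insert α (shift (σ \ {α}) α) with hf
  have hfS : ∀ α ∈ σ, IsSimplex n p (f α) ∧ σ ∩ f α = {α} ∧ shift (σ \ {α}) α = f α \ {α} := by
    intro α hα
    obtain ⟨h1, h2, h3, h4⟩ := key hlin hα
    exact ⟨⟨by rw [hf]; rw [h2, hcard], h1⟩, h3, h4⟩
  have hset : {σ' : Finset (V n) | IsSimplex n p σ' ∧ SimpRel σ σ'}
      = ↑(insert σ (σ.image f)) := by
    ext σ'
    simp only [Set.mem_setOf_eq, Finset.coe_insert, Set.mem_insert_iff, Finset.coe_image,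
      Set.mem_image, Finset.mem_coe]
    constructor
    · rintro ⟨hs', h | ⟨α, hint, hshift⟩⟩
      · exact Or.inl h.symm
      · right
        have hασ' : α ∈ σ' := by
          have : α ∈ σ ∩ σ' := by rw [hint]; exact Finset.mem_singleton_self α
          exact (Finset.mem_inter.mp this).2
        have hασ : α ∈ σ := by
          have : α ∈ σ ∩ σ' := by rw [hint]; exact Finset.mem_singleton_self α
          exact (Finset.mem_inter.mp this).1
        refine ⟨α, hασ, ?_⟩
        show insert α (shift (σ \ {α}) α) = σ'
        rw [hshift, Finset.sdiff_singleton_eq_erase, Finset.insert_erase hασ']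
    · rintro (rfl | ⟨α, hα, rfl⟩)
      · exact ⟨⟨hcard, hlin⟩, Or.inl rfl⟩
      · obtain ⟨hsimp, hint, hshift⟩ := hfS α hα
        exact ⟨hsimp, Or.inr ⟨α, hint, hshift⟩⟩
  rw [hset, Set.ncard_coe_finset]
  have hnot : σ ∉ σ.image f := by
    intro hmem
    obtain ⟨α, hα, hfα⟩ := Finset.mem_image.mp hmem
    have h2 := (hfS α hα).2.1
    rw [hfα, Finset.inter_self] at h2
    rw [h2, Finset.card_singleton] at hcard
    omega
  have hinj : Set.InjOn f ↑σ := by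
    intro a ha b hb h
    have h2 := (hfS a (Finset.mem_coe.mp ha)).2.1
    rw [h, (hfS b (Finset.mem_coe.mp hb)).2.1] at h2
    exact (Finset.singleton_injective h2).symm
  rw [Finset.card_insert_of_notMem hnot, Finset.card_image_of_injOn hinj, hcard]
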